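/- arXiv:2107.04107 — 3 statements merged into one kernel-verified Lean document; each statement's English description precedes it below -/
import Mathlib

section
/- Let V be the ℂ-vector space of homogeneous polynomials of degree 6 in ℂ[s₀, s₁, s₂, s₃] that lie in the ideal (sᵢ, sⱼ)² for every pair 0 ≤ i < j ≤ 3. Then V has dimension 14, and a basis of V is given by the four monomials s₁²s₂²s₃², s₀²s₂²s₃², s₀²s₁²s₃², s₀²s₁²s₂² together with the ten monomials s₀s₁s₂s₃·m, where m ranges over the ten monomials of degree 2 in s₀, s₁, s₂, s₃. -/
open MvPolynomial

/-- The space of sextic forms in 4 variables lying in `(sᵢ, sⱼ)²` for all pairs `i < j`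
(i.e. sextic surfaces double along the six edges of the coordinate tetrahedron). -/
noncomputable def enriquesSexticSpace : Submodule ℂ (MvPolynomial (Fin 4) ℂ) :=
  (homogeneousSubmodule (Fin 4) ℂ 6) ⊓
    ⨅ (i : Fin 4) (j : Fin 4) (_ : i < j),
      (Submodule.restrictScalars ℂ
        ((Ideal.span {(X i : MvPolynomial (Fin 4) ℂ), X j}) ^ 2))

/-- The 14 monomials: for each `i`, the product `∏_{j ≠ i} sⱼ²`, and for each pair
`i ≤ j`, the monomial `s₀s₁s₂s₃ · sᵢsⱼ`. -/
noncomputable def enriquesSexticBasisFamily :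
    (Fin 4 ⊕ {p : Fin 4 × Fin 4 // p.1 ≤ p.2}) → MvPolynomial (Fin 4) ℂ :=
  Sum.elim
    (fun i => ∏ j ∈ Finset.univ.filter (· ≠ i), (X j) ^ 2)
    (fun p => (X 0 * X 1 * X 2 * X 3) * (X p.1.1 * X p.1.2))

/-! ### Auxiliary material -/

/-- The exponent vectors of the 14 basis monomials. -/
noncomputable def enriquesExp : (Fin 4 ⊕ {p : Fin 4 × Fin 4 // p.1 ≤ p.2}) → (Fin 4 →₀ ℕ) :=
  Sum.elim
    (fun i => ∑ j ∈ Finset.univ.filter (· ≠ i), Finsupp.single j 2)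
    (fun p => (Finsupp.single 0 1 + Finsupp.single 1 1 + Finsupp.single 2 1 +
        Finsupp.single 3 1) + (Finsupp.single p.1.1 1 + Finsupp.single p.1.2 1))

lemma prod_monomial_one {α : Type*} (s : Finset α) (f : α → (Fin 4 →₀ ℕ)) :
    ∏ j ∈ s, (monomial (f j) (1 : ℂ)) = monomial (∑ j ∈ s, f j) 1 := by
  induction s using Finset.cons_induction with
  | empty => simp
  | cons a s ha ih =>
      rw [Finset.prod_cons, Finset.sum_cons, ih, monomial_mul, one_mul]

lemma family_eq (k : Fin 4 ⊕ {p : Fin 4 × Fin 4 // p.1 ≤ p.2}) :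
    enriquesSexticBasisFamily k = monomial (enriquesExp k) 1 := by
  have hX : ∀ i : Fin 4, (X i : MvPolynomial (Fin 4) ℂ) = monomial (Finsupp.single i 1) 1 :=
    fun i => rfl
  rcases k with i | p
  · simp only [enriquesSexticBasisFamily, enriquesExp, Sum.elim_inl]
    rw [← prod_monomial_one]
    refine Finset.prod_congr rfl fun j _ => ?_
    rw [X_pow_eq_monomial]
  · simp only [enriquesSexticBasisFamily, enriquesExp, Sum.elim_inr]
    simp only [hX, monomial_mul, one_mul]

/-- The tuple of values of the exponent vectors, as a pure function. -/
def enriquesTup : (Fin 4 ⊕ {p : Fin 4 × Fin 4 // p.1 ≤ p.2}) → Fin 4 → ℕ :=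
  Sum.elim
    (fun i x => if x = i then 0 else 2)
    (fun p x => 1 + ((if p.1.1 = x then 1 else 0) + (if p.1.2 = x then 1 else 0)))

lemma exp_inl_apply (i x : Fin 4) :
    enriquesExp (Sum.inl i) x = if x = i then 0 else 2 := by
  simp only [enriquesExp, Sum.elim_inl, Finsupp.finset_sum_apply, Finsupp.single_apply]
  rw [Finset.sum_filter]
  fin_cases i <;> fin_cases x <;> simp [Fin.sum_univ_four]

lemma exp_inr_apply (p : {p : Fin 4 × Fin 4 // p.1 ≤ p.2}) (x : Fin 4) :
    enriquesExp (Sum.inr p) x =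
      ((if (0 : Fin 4) = x then 1 else 0) + (if (1 : Fin 4) = x then 1 else 0) +
        (if (2 : Fin 4) = x then 1 else 0) + (if (3 : Fin 4) = x then 1 else 0)) +
      ((if p.1.1 = x then 1 else 0) + (if p.1.2 = x then 1 else 0)) := by
  simp [enriquesExp, Finsupp.single_apply]

lemma exp_inr_apply' (p : {p : Fin 4 × Fin 4 // p.1 ≤ p.2}) (x : Fin 4) :
    enriquesExp (Sum.inr p) x =
      1 + ((if p.1.1 = x then 1 else 0) + (if p.1.2 = x then 1 else 0)) := by
  rw [exp_inr_apply]
  congr 1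
  fin_cases x <;> simp

lemma exp_apply (k : Fin 4 ⊕ {p : Fin 4 × Fin 4 // p.1 ≤ p.2}) (x : Fin 4) :
    enriquesExp k x = enriquesTup k x := by
  rcases k with i | p
  · exact exp_inl_apply i x
  · exact exp_inr_apply' p x

lemma tup_injective : Function.Injective enriquesTup := by decide

lemma exp_injective : Function.Injective enriquesExp := by
  intro k k' h
  refine tup_injective (funext fun x => ?_)
  rw [← exp_apply, ← exp_apply, h]

lemma degree_eq_sum_four (m : Fin 4 →₀ ℕ) :
    m.degree = m 0 + m 1 + m 2 + m 3 := by
  rw [Finsupp.degree_apply, Finset.sum_subset (Finset.subset_univ _)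
    (fun x _ hx => Finsupp.notMem_support_iff.mp hx), Fin.sum_univ_four]

lemma key14 (a b c d : ℕ) (h6 : a + b + c + d = 6) (h01 : 2 ≤ a + b)
    (h02 : 2 ≤ a + c) (h03 : 2 ≤ a + d) (h12 : 2 ≤ b + c) (h13 : 2 ≤ b + d)
    (h23 : 2 ≤ c + d) :
      (a = 0 ∧ b = 2 ∧ c = 2 ∧ d = 2) ∨ (a = 2 ∧ b = 0 ∧ c = 2 ∧ d = 2) ∨
      (a = 2 ∧ b = 2 ∧ c = 0 ∧ d = 2) ∨ (a = 2 ∧ b = 2 ∧ c = 2 ∧ d = 0) ∨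
      (a = 3 ∧ b = 1 ∧ c = 1 ∧ d = 1) ∨ (a = 2 ∧ b = 2 ∧ c = 1 ∧ d = 1) ∨
      (a = 2 ∧ b = 1 ∧ c = 2 ∧ d = 1) ∨ (a = 2 ∧ b = 1 ∧ c = 1 ∧ d = 2) ∨
      (a = 1 ∧ b = 3 ∧ c = 1 ∧ d = 1) ∨ (a = 1 ∧ b = 2 ∧ c = 2 ∧ d = 1) ∨
      (a = 1 ∧ b = 2 ∧ c = 1 ∧ d = 2) ∨ (a = 1 ∧ b = 1 ∧ c = 3 ∧ d = 1) ∨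
      (a = 1 ∧ b = 1 ∧ c = 2 ∧ d = 2) ∨ (a = 1 ∧ b = 1 ∧ c = 1 ∧ d = 3) := by
  have ha : a = 0 ∨ a = 1 ∨ a = 2 ∨ a = 3 := by omega
  rcases ha with rfl | rfl | rfl | rfl
  · have : b = 2 ∧ c = 2 ∧ d = 2 := by omega
    obtain ⟨rfl, rfl, rfl⟩ := this
    decide
  · have hb : b = 1 ∨ b = 2 ∨ b = 3 := by omega
    rcases hb with rfl | rfl | rfl
    · have : (c = 1 ∧ d = 3) ∨ (c = 2 ∧ d = 2) ∨ (c = 3 ∧ d = 1) := by omega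
      rcases this with ⟨rfl, rfl⟩ | ⟨rfl, rfl⟩ | ⟨rfl, rfl⟩ <;> decide
    · have : (c = 1 ∧ d = 2) ∨ (c = 2 ∧ d = 1) := by omega
      rcases this with ⟨rfl, rfl⟩ | ⟨rfl, rfl⟩ <;> decide
    · have : c = 1 ∧ d = 1 := by omega
      obtain ⟨rfl, rfl⟩ := this
      decide
  · have hb : b = 0 ∨ b = 1 ∨ b = 2 := by omega
    rcases hb with rfl | rfl | rfl
    · have : c = 2 ∧ d = 2 := by omega
      obtain ⟨rfl, rfl⟩ := this
      decide
    · have : (c = 1 ∧ d = 2) ∨ (c = 2 ∧ d = 1) := by omega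
      rcases this with ⟨rfl, rfl⟩ | ⟨rfl, rfl⟩ <;> decide
    · have : (c = 0 ∧ d = 2) ∨ (c = 1 ∧ d = 1) ∨ (c = 2 ∧ d = 0) := by omega
      rcases this with ⟨rfl, rfl⟩ | ⟨rfl, rfl⟩ | ⟨rfl, rfl⟩ <;> decide
  · have : b = 1 ∧ c = 1 ∧ d = 1 := by omega
    obtain ⟨rfl, rfl, rfl⟩ := this
    decide

/-- A classification of the admissible exponent vectors. -/
lemma classify (m : Fin 4 →₀ ℕ) (h6 : m 0 + m 1 + m 2 + m 3 = 6)
    (hp : ∀ i j : Fin 4, i < j → 2 ≤ m i + m j) : ∃ k, enriquesExp k = m := by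
  have h01 := hp 0 1 (by decide)
  have h02 := hp 0 2 (by decide)
  have h03 := hp 0 3 (by decide)
  have h12 := hp 1 2 (by decide)
  have h13 := hp 1 3 (by decide)
  have h23 := hp 2 3 (by decide)
  have build : ∀ k, (∀ x : Fin 4, enriquesTup k x = m x) → ∃ k', enriquesExp k' = m :=
    fun k hk => ⟨k, by ext x; rw [exp_apply]; exact hk x⟩
  have key :
      (m 0 = 0 ∧ m 1 = 2 ∧ m 2 = 2 ∧ m 3 = 2) ∨ (m 0 = 2 ∧ m 1 = 0 ∧ m 2 = 2 ∧ m 3 = 2) ∨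
      (m 0 = 2 ∧ m 1 = 2 ∧ m 2 = 0 ∧ m 3 = 2) ∨ (m 0 = 2 ∧ m 1 = 2 ∧ m 2 = 2 ∧ m 3 = 0) ∨
      (m 0 = 3 ∧ m 1 = 1 ∧ m 2 = 1 ∧ m 3 = 1) ∨ (m 0 = 2 ∧ m 1 = 2 ∧ m 2 = 1 ∧ m 3 = 1) ∨
      (m 0 = 2 ∧ m 1 = 1 ∧ m 2 = 2 ∧ m 3 = 1) ∨ (m 0 = 2 ∧ m 1 = 1 ∧ m 2 = 1 ∧ m 3 = 2) ∨
      (m 0 = 1 ∧ m 1 = 3 ∧ m 2 = 1 ∧ m 3 = 1) ∨ (m 0 = 1 ∧ m 1 = 2 ∧ m 2 = 2 ∧ m 3 = 1) ∨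
      (m 0 = 1 ∧ m 1 = 2 ∧ m 2 = 1 ∧ m 3 = 2) ∨ (m 0 = 1 ∧ m 1 = 1 ∧ m 2 = 3 ∧ m 3 = 1) ∨
      (m 0 = 1 ∧ m 1 = 1 ∧ m 2 = 2 ∧ m 3 = 2) ∨ (m 0 = 1 ∧ m 1 = 1 ∧ m 2 = 1 ∧ m 3 = 3) :=
    key14 _ _ _ _ h6 h01 h02 h03 h12 h13 h23
  rcases key with h | h | h | h | h | h | h | h | h | h | h | h | h | h
  · exact build (Sum.inl 0) (by intro x; fin_cases x <;> simp [enriquesTup] <;> omega)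
  · exact build (Sum.inl 1) (by intro x; fin_cases x <;> simp [enriquesTup] <;> omega)
  · exact build (Sum.inl 2) (by intro x; fin_cases x <;> simp [enriquesTup] <;> omega)
  · exact build (Sum.inl 3) (by intro x; fin_cases x <;> simp [enriquesTup] <;> omega)
  · exact build (Sum.inr ⟨(0, 0), by decide⟩) (by intro x; fin_cases x <;> simp [enriquesTup] <;> omega)
  · exact build (Sum.inr ⟨(0, 1), by decide⟩) (by intro x; fin_cases x <;> simp [enriquesTup] <;> omega)
  · exact build (Sum.inr ⟨(0, 2), by decide⟩) (by intro x; fin_cases x <;> simp [enriquesTup] <;> omega)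
  · exact build (Sum.inr ⟨(0, 3), by decide⟩) (by intro x; fin_cases x <;> simp [enriquesTup] <;> omega)
  · exact build (Sum.inr ⟨(1, 1), by decide⟩) (by intro x; fin_cases x <;> simp [enriquesTup] <;> omega)
  · exact build (Sum.inr ⟨(1, 2), by decide⟩) (by intro x; fin_cases x <;> simp [enriquesTup] <;> omega)
  · exact build (Sum.inr ⟨(1, 3), by decide⟩) (by intro x; fin_cases x <;> simp [enriquesTup] <;> omega)
  · exact build (Sum.inr ⟨(2, 2), by decide⟩) (by intro x; fin_cases x <;> simp [enriquesTup] <;> omega)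
  · exact build (Sum.inr ⟨(2, 3), by decide⟩) (by intro x; fin_cases x <;> simp [enriquesTup] <;> omega)
  · exact build (Sum.inr ⟨(3, 3), by decide⟩) (by intro x; fin_cases x <;> simp [enriquesTup] <;> omega)

/-- The squared edge ideal is the monomial ideal on exponents. -/
lemma ideal_sq_eq (i j : Fin 4) :
    (Ideal.span {(X i : MvPolynomial (Fin 4) ℂ), X j}) ^ 2 =
      Ideal.span ((fun s => monomial s (1 : ℂ)) ''
        {Finsupp.single i 2, Finsupp.single i 1 + Finsupp.single j 1, Finsupp.single j 2}) := by
  rw [pow_two, Ideal.span_pair_mul_span_pair]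
  congr 1
  have h1 : (X i : MvPolynomial (Fin 4) ℂ) * X i = monomial (Finsupp.single i 2) 1 := by
    rw [← X_pow_eq_monomial, pow_two]
  have h2 : (X i : MvPolynomial (Fin 4) ℂ) * X j =
      monomial (Finsupp.single i 1 + Finsupp.single j 1) 1 := by
    rw [show (X i : MvPolynomial (Fin 4) ℂ) = monomial (Finsupp.single i 1) 1 from rfl,
      show (X j : MvPolynomial (Fin 4) ℂ) = monomial (Finsupp.single j 1) 1 from rfl,
      monomial_mul, one_mul]
  have h3 : (X j : MvPolynomial (Fin 4) ℂ) * X i =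
      monomial (Finsupp.single i 1 + Finsupp.single j 1) 1 := by rw [mul_comm, h2]
  have h4 : (X j : MvPolynomial (Fin 4) ℂ) * X j = monomial (Finsupp.single j 2) 1 := by
    rw [← X_pow_eq_monomial, pow_two]
  rw [Set.image_insert_eq, Set.image_insert_eq, Set.image_singleton, h1, h2, h3, h4]
  rw [show ({monomial (Finsupp.single i 1 + Finsupp.single j 1) 1,
      monomial (Finsupp.single i 1 + Finsupp.single j 1) 1,
      monomial (Finsupp.single j 2) (1:ℂ)} : Set (MvPolynomial (Fin 4) ℂ)) =
      {monomial (Finsupp.single i 1 + Finsupp.single j 1) 1,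
        monomial (Finsupp.single j 2) (1:ℂ)} from Set.insert_idem _ _]

/-- Membership in the squared edge ideal, monomialwise. -/
lemma mem_ideal_sq_iff (i j : Fin 4) (hij : i ≠ j) (p : MvPolynomial (Fin 4) ℂ) :
    p ∈ (Ideal.span {(X i : MvPolynomial (Fin 4) ℂ), X j}) ^ 2 ↔
      ∀ m ∈ p.support, 2 ≤ m i + m j := by
  rw [ideal_sq_eq, mem_ideal_span_monomial_image]
  refine forall₂_congr fun m _ => ?_
  constructor
  · rintro ⟨s, hs, hsm⟩
    have hi := Finsupp.le_def.mp hsm i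
    have hj := Finsupp.le_def.mp hsm j
    rcases hs with rfl | rfl | rfl
    · rw [Finsupp.single_eq_same] at hi; omega
    · rw [Finsupp.add_apply, Finsupp.single_eq_same] at hi
      rw [Finsupp.add_apply, Finsupp.single_eq_same] at hj
      omega
    · rw [Finsupp.single_eq_same] at hj; omega
  · intro h
    rcases le_or_gt 2 (m i) with hi | hi
    · refine ⟨Finsupp.single i 2, Or.inl rfl, Finsupp.le_def.mpr fun x => ?_⟩
      rcases eq_or_ne x i with rfl | hx
      · simpa using hi
      · simp [Finsupp.single_apply, Ne.symm hx]
    rcases le_or_gt 2 (m j) with hj | hj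
    · refine ⟨Finsupp.single j 2, Or.inr (Or.inr rfl), Finsupp.le_def.mpr fun x => ?_⟩
      rcases eq_or_ne x j with rfl | hx
      · simpa using hj
      · simp [Finsupp.single_apply, Ne.symm hx]
    refine ⟨Finsupp.single i 1 + Finsupp.single j 1, Or.inr (Or.inl rfl),
      Finsupp.le_def.mpr fun x => ?_⟩
    rcases eq_or_ne x i with hxi | hxi
    · rw [hxi, Finsupp.add_apply, Finsupp.single_eq_same,
        Finsupp.single_apply, if_neg (Ne.symm hij)]
      omega
    rcases eq_or_ne x j with hxj | hxj
    · rw [hxj, Finsupp.add_apply, Finsupp.single_eq_same,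
        Finsupp.single_apply, if_neg hij]
      omega
    · simp [Finsupp.single_apply, Ne.symm hxi, Ne.symm hxj]

/-- Membership in the space, monomialwise. -/
lemma mem_space_iff (p : MvPolynomial (Fin 4) ℂ) :
    p ∈ enriquesSexticSpace ↔
      ∀ m ∈ p.support, (m 0 + m 1 + m 2 + m 3 = 6) ∧
        ∀ i j : Fin 4, i < j → 2 ≤ m i + m j := by
  simp only [enriquesSexticSpace, Submodule.mem_inf, Submodule.mem_iInf,
    Submodule.restrictScalars_mem, mem_homogeneousSubmodule]
  constructor
  · rintro ⟨h1, h2⟩ m hm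
    refine ⟨?_, fun i j hij =>
      (mem_ideal_sq_iff i j (Fin.ne_of_lt hij) p).mp (h2 i j hij) m hm⟩
    have := h1 (MvPolynomial.mem_support_iff.mp hm)
    erw [← Finsupp.degree_eq_weight_one] at this
    rw [← degree_eq_sum_four, this]
  · intro h
    refine ⟨fun d hd => ?_, fun i j hij =>
      (mem_ideal_sq_iff i j (Fin.ne_of_lt hij) p).mpr fun m hm => (h m hm).2 i j hij⟩
    erw [← Finsupp.degree_eq_weight_one, degree_eq_sum_four]
    exact (h d (MvPolynomial.mem_support_iff.mpr hd)).1

lemma basis_mem (k : Fin 4 ⊕ {p : Fin 4 × Fin 4 // p.1 ≤ p.2}) :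
    enriquesSexticBasisFamily k ∈ enriquesSexticSpace := by
  rw [family_eq, mem_space_iff]
  intro m hm
  have hm' : m = enriquesExp k := by
    rcases Finset.mem_singleton.mp (Finset.mem_of_subset support_monomial_subset hm) with h
    exact h
  subst hm'
  constructor
  · rcases k with i | p
    · simp only [exp_inl_apply]
      fin_cases i <;> simp
    · simp only [exp_inr_apply']
      rcases p with ⟨⟨a, b⟩, hab⟩
      fin_cases a <;> fin_cases b <;> simp
  · intro i j hij
    rcases k with i' | p
    · simp only [exp_inl_apply]
      have hij' : i ≠ j := Fin.ne_of_lt hij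
      rcases eq_or_ne i i' with rfl | hi
      · rw [if_pos rfl, if_neg fun h => hij' (h.trans rfl).symm]
        try omega
      · rw [if_neg hi]
        omega
    · simp only [exp_inr_apply']
      omega

/-- The space of Enriques sextics has dimension 14, with basis the 14 listed monomials. -/
theorem stmt_2 :
    LinearIndependent ℂ enriquesSexticBasisFamily ∧
    Submodule.span ℂ (Set.range enriquesSexticBasisFamily) = enriquesSexticSpace ∧
    Module.finrank ℂ enriquesSexticSpace = 14 := by
  have hli : LinearIndependent ℂ enriquesSexticBasisFamily := by
    have : enriquesSexticBasisFamily = (basisMonomials (Fin 4) ℂ) ∘ enriquesExp := by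
      funext k
      rw [family_eq, Function.comp_apply, coe_basisMonomials]
    rw [this]
    exact (basisMonomials (Fin 4) ℂ).linearIndependent.comp enriquesExp exp_injective
  have hspan : Submodule.span ℂ (Set.range enriquesSexticBasisFamily) = enriquesSexticSpace := by
    apply le_antisymm
    · rw [Submodule.span_le]
      rintro _ ⟨k, rfl⟩
      exact basis_mem k
    · intro p hp
      rw [mem_space_iff] at hp
      rw [p.as_sum]
      refine Submodule.sum_mem _ fun m hm => ?_
      obtain ⟨k, hk⟩ := classify m (hp m hm).1 (hp m hm).2
      have : monomial m (coeff m p) = (coeff m p) • enriquesSexticBasisFamily k := by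
        rw [family_eq, hk, smul_monomial, smul_eq_mul, mul_one]
      rw [this]
      exact Submodule.smul_mem _ _ (Submodule.subset_span ⟨k, rfl⟩)
  refine ⟨hli, hspan, ?_⟩
  rw [← hspan, finrank_span_eq_card hli]
  simp only [Fintype.card_sum, Fintype.card_fin]
  decide
end

section
/- Let f₁, f₂, f₃, g₁, g₂, g₃ ∈ ℂ[s₀, s₁, s₂, s₃] be six nonzero linear forms that are pairwise non-proportional. Then the following ten homogeneous polynomials of degree 7 are linearly independent over ℂ: the four polynomials f₁f₂f₃g₁g₂g₃·sᵢ for i = 0, 1, 2, 3; the three polynomials g₁g₂g₃·f₂²f₃², g₁g₂g₃·f₁²f₃², g₁g₂g₃·f₁²f₂²; and the three polynomials f₁f₂f₃·g₂²g₃², f₁f₂f₃·g₁²g₃², f₁f₂f₃·g₁²g₂². -/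
open MvPolynomial

private lemma stmt6_degree_add (a b : Fin 4 →₀ ℕ) :
    (a + b).degree = a.degree + b.degree := by
  simp [Finsupp.degree_eq_weight_one]

private lemma stmt6_tdm {a b : MvPolynomial (Fin 4) ℂ} (ha : a ≠ 0) (hb : b ≠ 0) :
    (a * b).totalDegree = a.totalDegree + b.totalDegree := by
  classical
  refine le_antisymm (totalDegree_mul a b) ?_
  set da := a.totalDegree with hda
  set db := b.totalDegree with hdb
  set A := homogeneousComponent da a with hA
  set B := homogeneousComponent db b with hB
  have hdeg_def : ∀ d : Fin 4 →₀ ℕ, d.degree = d.sum fun _ e => e := fun d => rfl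
  have hAne : A ≠ 0 := by
    obtain ⟨d, hd, hdeq⟩ := Finset.exists_mem_eq_sup a.support
      (Finset.nonempty_iff_ne_empty.mpr (fun h => ha (support_eq_empty.mp h)))
      (fun s => s.sum fun _ e => e)
    rw [ne_zero_iff]
    refine ⟨d, ?_⟩
    rw [hA, coeff_homogeneousComponent, if_pos (by rw [hdeg_def]; exact hdeq.symm)]
    exact mem_support_iff.mp hd
  have hBne : B ≠ 0 := by
    obtain ⟨d, hd, hdeq⟩ := Finset.exists_mem_eq_sup b.support
      (Finset.nonempty_iff_ne_empty.mpr (fun h => hb (support_eq_empty.mp h)))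
      (fun s => s.sum fun _ e => e)
    rw [ne_zero_iff]
    refine ⟨d, ?_⟩
    rw [hB, coeff_homogeneousComponent, if_pos (by rw [hdeg_def]; exact hdeq.symm)]
    exact mem_support_iff.mp hd
  have hABh : (A * B).IsHomogeneous (da + db) :=
    (homogeneousComponent_isHomogeneous da a).mul (homogeneousComponent_isHomogeneous db b)
  obtain ⟨d, hd⟩ := ne_zero_iff.mp (mul_ne_zero hAne hBne)
  have hddeg : d.degree = da + db := by
    by_contra h
    exact hd (hABh.coeff_eq_zero h)
  have key : coeff d (a * b) = coeff d (A * B) := by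
    rw [coeff_mul, coeff_mul]
    refine Finset.sum_congr rfl fun x hx => ?_
    have hsum : x.1 + x.2 = d := Finset.HasAntidiagonal.mem_antidiagonal.mp hx
    have hdd : x.1.degree + x.2.degree = da + db := by
      rw [← stmt6_degree_add, hsum, hddeg]
    rw [hA, hB, coeff_homogeneousComponent, coeff_homogeneousComponent]
    by_cases h1 : x.1.degree = da
    · have h2 : x.2.degree = db := by omega
      rw [if_pos h1, if_pos h2]
    · rcases lt_or_gt_of_ne h1 with hlt | hgt
      · have h2 : db < x.2.degree := by omega
        have hb0 : coeff x.2 b = 0 := by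
          apply coeff_eq_zero_of_totalDegree_lt
          exact h2
        rw [if_neg h1, hb0, mul_zero, zero_mul]
      · have ha0 : coeff x.1 a = 0 := by
          apply coeff_eq_zero_of_totalDegree_lt
          exact hgt
        rw [if_neg h1, ha0, zero_mul, zero_mul]
  have hmem : d ∈ (a * b).support := mem_support_iff.mpr (by rw [key]; exact hd)
  have := le_totalDegree hmem
  rw [← hdeg_def, hddeg] at this
  exact this

private lemma stmt6_eqC {p : MvPolynomial (Fin 4) ℂ} (h : p.totalDegree = 0) :
    p = C (coeff 0 p) := by
  have h0 : p.IsHomogeneous 0 := isHomogeneous_of_totalDegree_zero _ h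
  have := homogeneousComponent_of_mem (m := 0) (n := 0) h0
  rw [if_pos rfl] at this
  conv_lhs => rw [← this, homogeneousComponent_zero]

private lemma stmt6_prime {p : MvPolynomial (Fin 4) ℂ} (hp : p.IsHomogeneous 1)
    (h0 : p ≠ 0) : Prime p := by
  have hdeg : p.totalDegree = 1 := hp.totalDegree h0
  rw [← UniqueFactorizationMonoid.irreducible_iff_prime]
  constructor
  · intro hu
    obtain ⟨u, rfl⟩ := hu
    have h1 : ((u : MvPolynomial (Fin 4) ℂ) * ↑u⁻¹).totalDegree = 0 := by
      rw [u.mul_inv]; exact totalDegree_one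
    have hu1 : (u : MvPolynomial (Fin 4) ℂ) ≠ 0 := h0
    have hu2 : (↑u⁻¹ : MvPolynomial (Fin 4) ℂ) ≠ 0 := u⁻¹.ne_zero
    rw [stmt6_tdm hu1 hu2] at h1
    omega
  · intro a b hab
    have hane : a ≠ 0 := fun h => h0 (by rw [hab, h, zero_mul])
    have hbne : b ≠ 0 := fun h => h0 (by rw [hab, h, mul_zero])
    have hsum : a.totalDegree + b.totalDegree = 1 := by
      rw [← stmt6_tdm hane hbne, ← hab, hdeg]
    have hunit : ∀ q : MvPolynomial (Fin 4) ℂ, q ≠ 0 → q.totalDegree = 0 → IsUnit q := by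
      intro q hq hq0
      have := stmt6_eqC hq0
      have hc : coeff 0 q ≠ 0 := fun h => hq (by rw [this, h, map_zero])
      rw [this]
      exact (isUnit_iff_ne_zero.mpr hc).map C
    rcases Nat.eq_zero_or_pos a.totalDegree with h | h
    · exact Or.inl (hunit a hane h)
    · exact Or.inr (hunit b hbne (by omega))

private lemma stmt6_dvd_lin {p q : MvPolynomial (Fin 4) ℂ} (hp : p.IsHomogeneous 1)
    (hq : q.IsHomogeneous 1) (hp0 : p ≠ 0) (hq0 : q ≠ 0) (h : p ∣ q) :
    ∃ c : ℂ, q = C c * p := by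
  obtain ⟨r, hr⟩ := h
  have hr0 : r ≠ 0 := fun h => hq0 (by rw [hr, h, mul_zero])
  have hdeg : r.totalDegree = 0 := by
    have := hq.totalDegree hq0
    rw [hr, stmt6_tdm hp0 hr0, hp.totalDegree hp0] at this
    omega
  refine ⟨coeff 0 r, ?_⟩
  rw [hr]
  conv_lhs => rw [stmt6_eqC hdeg]
  exact mul_comm _ _

private lemma stmt6_unit_smul {p : MvPolynomial (Fin 4) ℂ} (hp : Prime p) {w : ℂ}
    (hw : w ≠ 0) {t : MvPolynomial (Fin 4) ℂ} (h : p ∣ C w * t) : p ∣ t := by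
  rcases hp.dvd_mul.mp h with h | h
  · exact absurd (isUnit_of_dvd_unit h ((isUnit_iff_ne_zero.mpr hw).map C)) hp.not_unit
  · exact h

private lemma stmt6_not_dvd_block {p a b c d e : MvPolynomial (Fin 4) ℂ} (hp : Prime p)
    (ha : ¬ p ∣ a) (hb : ¬ p ∣ b) (hc : ¬ p ∣ c) (hd : ¬ p ∣ d) (he : ¬ p ∣ e) :
    ¬ p ∣ a * b * c * (d ^ 2 * e ^ 2) := by
  intro h
  rcases hp.dvd_mul.mp h with h | h
  · rcases hp.dvd_mul.mp h with h | h
    · rcases hp.dvd_mul.mp h with h | h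
      · exact ha h
      · exact hb h
    · exact hc h
  · rcases hp.dvd_mul.mp h with h | h
    · exact hd (hp.dvd_of_dvd_pow h)
    · exact he (hp.dvd_of_dvd_pow h)

private lemma stmt6_extract {p t : MvPolynomial (Fin 4) ℂ} (hp : Prime p) {c : ℂ}
    (h : p ∣ C c * t) (hnd : ¬ p ∣ t) : c = 0 := by
  by_contra hne
  exact hnd (stmt6_unit_smul hp hne h)

set_option maxHeartbeats 2000000 in
/-- Given six nonzero pairwise non-proportional linear forms `f₁,f₂,f₃,g₁,g₂,g₃` in
`ℂ[s₀,s₁,s₂,s₃]`, the ten septic forms `f₁f₂f₃g₁g₂g₃·sᵢ` (i = 0,…,3),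
`g₁g₂g₃·∏_{j≠k} fⱼ²` (k = 1,2,3) and `f₁f₂f₃·∏_{j≠k} gⱼ²` (k = 1,2,3) are
linearly independent over ℂ. -/
theorem stmt_6 (f g : Fin 3 → MvPolynomial (Fin 4) ℂ)
    (hf : ∀ i, (f i).IsHomogeneous 1) (hg : ∀ i, (g i).IsHomogeneous 1)
    (hf0 : ∀ i, f i ≠ 0) (hg0 : ∀ i, g i ≠ 0)
    (hprop : ∀ a b : Fin 3 ⊕ Fin 3, a ≠ b →
      ∀ c : ℂ, Sum.elim f g a ≠ C c * Sum.elim f g b) :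
    LinearIndependent ℂ
      (Sum.elim
        (fun i : Fin 4 => (f 0 * f 1 * f 2) * (g 0 * g 1 * g 2) * X i)
        (Sum.elim
          (fun k : Fin 3 => (g 0 * g 1 * g 2) * ∏ j ∈ Finset.univ.filter (· ≠ k), (f j) ^ 2)
          (fun k : Fin 3 => (f 0 * f 1 * f 2) * ∏ j ∈ Finset.univ.filter (· ≠ k), (g j) ^ 2))) := by
  have hprime_f : ∀ i, Prime (f i) := fun i => stmt6_prime (hf i) (hf0 i)
  have hprime_g : ∀ i, Prime (g i) := fun i => stmt6_prime (hg i) (hg0 i)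
  -- non-divisibility between distinct linear forms
  have hnd : ∀ a b : Fin 3 ⊕ Fin 3, a ≠ b → ¬ (Sum.elim f g a ∣ Sum.elim f g b) := by
    intro a b hab hdvd
    have h1 : (Sum.elim f g a).IsHomogeneous 1 := by cases a <;> [exact hf _; exact hg _]
    have h2 : (Sum.elim f g b).IsHomogeneous 1 := by cases b <;> [exact hf _; exact hg _]
    have h10 : Sum.elim f g a ≠ 0 := by cases a <;> [exact hf0 _; exact hg0 _]
    have h20 : Sum.elim f g b ≠ 0 := by cases b <;> [exact hf0 _; exact hg0 _]
    obtain ⟨c, hc⟩ := stmt6_dvd_lin h1 h2 h10 h20 hdvd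
    exact hprop b a (Ne.symm hab) c hc
  have hndfg : ∀ i j : Fin 3, ¬ f i ∣ g j :=
    fun i j => hnd (Sum.inl i) (Sum.inr j) (by simp)
  have hndgf : ∀ i j : Fin 3, ¬ g i ∣ f j :=
    fun i j => hnd (Sum.inr i) (Sum.inl j) (by simp)
  have hndff : ∀ i j : Fin 3, i ≠ j → ¬ f i ∣ f j :=
    fun i j hij => hnd (Sum.inl i) (Sum.inl j) (by simp [hij])
  have hndgg : ∀ i j : Fin 3, i ≠ j → ¬ g i ∣ g j :=
    fun i j hij => hnd (Sum.inr i) (Sum.inr j) (by simp [hij])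
  rw [Fintype.linearIndependent_iff]
  intro w hw
  have e0 : Finset.univ.filter (· ≠ (0 : Fin 3)) = {1, 2} := by decide
  have e1 : Finset.univ.filter (· ≠ (1 : Fin 3)) = {0, 2} := by decide
  have e2 : Finset.univ.filter (· ≠ (2 : Fin 3)) = {0, 1} := by decide
  simp only [Fintype.sum_sum_type, Sum.elim_inl, Sum.elim_inr, Fin.sum_univ_three,
    Fin.sum_univ_four, smul_eq_C_mul, e0, e1, e2,
    show ({1,2} : Finset (Fin 3)) = insert 1 {2} from rfl,
    show ({0,2} : Finset (Fin 3)) = insert 0 {2} from rfl,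
    show ({0,1} : Finset (Fin 3)) = insert 0 {1} from rfl,
    Finset.prod_insert (show (1:Fin 3) ∉ ({2}:Finset (Fin 3)) by decide),
    Finset.prod_insert (show (0:Fin 3) ∉ ({2}:Finset (Fin 3)) by decide),
    Finset.prod_insert (show (0:Fin 3) ∉ ({1}:Finset (Fin 3)) by decide),
    Finset.prod_singleton] at hw
  -- abbreviations for the ten coefficients
  set a0 := w (Sum.inl 0) with ha0d
  set a1 := w (Sum.inl 1) with ha1d
  set a2 := w (Sum.inl 2) with ha2d
  set a3 := w (Sum.inl 3) with ha3d
  set b0 := w (Sum.inr (Sum.inl 0)) with hb0d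
  set b1 := w (Sum.inr (Sum.inl 1)) with hb1d
  set b2 := w (Sum.inr (Sum.inl 2)) with hb2d
  set c0 := w (Sum.inr (Sum.inr 0)) with hc0d
  set c1 := w (Sum.inr (Sum.inr 1)) with hc1d
  set c2 := w (Sum.inr (Sum.inr 2)) with hc2d
  -- b0 = 0
  have hb0 : b0 = 0 := by
    refine stmt6_extract (hprime_f 0) (t := g 0 * g 1 * g 2 * (f 1 ^ 2 * f 2 ^ 2))
      ⟨-(C a0 * (f 1 * f 2 * (g 0 * g 1 * g 2) * X 0) +
         C a1 * (f 1 * f 2 * (g 0 * g 1 * g 2) * X 1) +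
         C a2 * (f 1 * f 2 * (g 0 * g 1 * g 2) * X 2) +
         C a3 * (f 1 * f 2 * (g 0 * g 1 * g 2) * X 3) +
         C b1 * (g 0 * g 1 * g 2 * (f 0 * f 2 ^ 2)) +
         C b2 * (g 0 * g 1 * g 2 * (f 0 * f 1 ^ 2)) +
         C c0 * (f 1 * f 2 * (g 1 ^ 2 * g 2 ^ 2)) +
         C c1 * (f 1 * f 2 * (g 0 ^ 2 * g 2 ^ 2)) +
         C c2 * (f 1 * f 2 * (g 0 ^ 2 * g 1 ^ 2))), by linear_combination hw⟩
      (stmt6_not_dvd_block (hprime_f 0) (hndfg 0 0) (hndfg 0 1) (hndfg 0 2)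
        (hndff 0 1 (by decide)) (hndff 0 2 (by decide)))
  have hb1 : b1 = 0 := by
    refine stmt6_extract (hprime_f 1) (t := g 0 * g 1 * g 2 * (f 0 ^ 2 * f 2 ^ 2))
      ⟨-(C a0 * (f 0 * f 2 * (g 0 * g 1 * g 2) * X 0) +
         C a1 * (f 0 * f 2 * (g 0 * g 1 * g 2) * X 1) +
         C a2 * (f 0 * f 2 * (g 0 * g 1 * g 2) * X 2) +
         C a3 * (f 0 * f 2 * (g 0 * g 1 * g 2) * X 3) +
         C b0 * (g 0 * g 1 * g 2 * (f 1 * f 2 ^ 2)) +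
         C b2 * (g 0 * g 1 * g 2 * (f 0 ^ 2 * f 1)) +
         C c0 * (f 0 * f 2 * (g 1 ^ 2 * g 2 ^ 2)) +
         C c1 * (f 0 * f 2 * (g 0 ^ 2 * g 2 ^ 2)) +
         C c2 * (f 0 * f 2 * (g 0 ^ 2 * g 1 ^ 2))), by linear_combination hw⟩
      (stmt6_not_dvd_block (hprime_f 1) (hndfg 1 0) (hndfg 1 1) (hndfg 1 2)
        (hndff 1 0 (by decide)) (hndff 1 2 (by decide)))
  have hb2 : b2 = 0 := by
    refine stmt6_extract (hprime_f 2) (t := g 0 * g 1 * g 2 * (f 0 ^ 2 * f 1 ^ 2))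
      ⟨-(C a0 * (f 0 * f 1 * (g 0 * g 1 * g 2) * X 0) +
         C a1 * (f 0 * f 1 * (g 0 * g 1 * g 2) * X 1) +
         C a2 * (f 0 * f 1 * (g 0 * g 1 * g 2) * X 2) +
         C a3 * (f 0 * f 1 * (g 0 * g 1 * g 2) * X 3) +
         C b0 * (g 0 * g 1 * g 2 * (f 1 ^ 2 * f 2)) +
         C b1 * (g 0 * g 1 * g 2 * (f 0 ^ 2 * f 2)) +
         C c0 * (f 0 * f 1 * (g 1 ^ 2 * g 2 ^ 2)) +
         C c1 * (f 0 * f 1 * (g 0 ^ 2 * g 2 ^ 2)) +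
         C c2 * (f 0 * f 1 * (g 0 ^ 2 * g 1 ^ 2))), by linear_combination hw⟩
      (stmt6_not_dvd_block (hprime_f 2) (hndfg 2 0) (hndfg 2 1) (hndfg 2 2)
        (hndff 2 0 (by decide)) (hndff 2 1 (by decide)))
  have hc0 : c0 = 0 := by
    refine stmt6_extract (hprime_g 0) (t := f 0 * f 1 * f 2 * (g 1 ^ 2 * g 2 ^ 2))
      ⟨-(C a0 * (g 1 * g 2 * (f 0 * f 1 * f 2) * X 0) +
         C a1 * (g 1 * g 2 * (f 0 * f 1 * f 2) * X 1) +
         C a2 * (g 1 * g 2 * (f 0 * f 1 * f 2) * X 2) +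
         C a3 * (g 1 * g 2 * (f 0 * f 1 * f 2) * X 3) +
         C b0 * (g 1 * g 2 * (f 1 ^ 2 * f 2 ^ 2)) +
         C b1 * (g 1 * g 2 * (f 0 ^ 2 * f 2 ^ 2)) +
         C b2 * (g 1 * g 2 * (f 0 ^ 2 * f 1 ^ 2)) +
         C c1 * (f 0 * f 1 * f 2 * (g 0 * g 2 ^ 2)) +
         C c2 * (f 0 * f 1 * f 2 * (g 0 * g 1 ^ 2))), by linear_combination hw⟩
      (stmt6_not_dvd_block (hprime_g 0) (hndgf 0 0) (hndgf 0 1) (hndgf 0 2)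
        (hndgg 0 1 (by decide)) (hndgg 0 2 (by decide)))
  have hc1 : c1 = 0 := by
    refine stmt6_extract (hprime_g 1) (t := f 0 * f 1 * f 2 * (g 0 ^ 2 * g 2 ^ 2))
      ⟨-(C a0 * (g 0 * g 2 * (f 0 * f 1 * f 2) * X 0) +
         C a1 * (g 0 * g 2 * (f 0 * f 1 * f 2) * X 1) +
         C a2 * (g 0 * g 2 * (f 0 * f 1 * f 2) * X 2) +
         C a3 * (g 0 * g 2 * (f 0 * f 1 * f 2) * X 3) +
         C b0 * (g 0 * g 2 * (f 1 ^ 2 * f 2 ^ 2)) +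
         C b1 * (g 0 * g 2 * (f 0 ^ 2 * f 2 ^ 2)) +
         C b2 * (g 0 * g 2 * (f 0 ^ 2 * f 1 ^ 2)) +
         C c0 * (f 0 * f 1 * f 2 * (g 1 * g 2 ^ 2)) +
         C c2 * (f 0 * f 1 * f 2 * (g 0 ^ 2 * g 1))), by linear_combination hw⟩
      (stmt6_not_dvd_block (hprime_g 1) (hndgf 1 0) (hndgf 1 1) (hndgf 1 2)
        (hndgg 1 0 (by decide)) (hndgg 1 2 (by decide)))
  have hc2 : c2 = 0 := by
    refine stmt6_extract (hprime_g 2) (t := f 0 * f 1 * f 2 * (g 0 ^ 2 * g 1 ^ 2))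
      ⟨-(C a0 * (g 0 * g 1 * (f 0 * f 1 * f 2) * X 0) +
         C a1 * (g 0 * g 1 * (f 0 * f 1 * f 2) * X 1) +
         C a2 * (g 0 * g 1 * (f 0 * f 1 * f 2) * X 2) +
         C a3 * (g 0 * g 1 * (f 0 * f 1 * f 2) * X 3) +
         C b0 * (g 0 * g 1 * (f 1 ^ 2 * f 2 ^ 2)) +
         C b1 * (g 0 * g 1 * (f 0 ^ 2 * f 2 ^ 2)) +
         C b2 * (g 0 * g 1 * (f 0 ^ 2 * f 1 ^ 2)) +
         C c0 * (f 0 * f 1 * f 2 * (g 1 ^ 2 * g 2)) +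
         C c1 * (f 0 * f 1 * f 2 * (g 0 ^ 2 * g 2))), by linear_combination hw⟩
      (stmt6_not_dvd_block (hprime_g 2) (hndgf 2 0) (hndgf 2 1) (hndgf 2 2)
        (hndgg 2 0 (by decide)) (hndgg 2 1 (by decide)))
  -- now only the a-terms remain
  have hFG : (f 0 * f 1 * f 2) * (g 0 * g 1 * g 2) ≠ 0 := by
    apply mul_ne_zero <;> apply mul_ne_zero <;> first
      | apply mul_ne_zero (hf0 _) (hf0 _)
      | apply mul_ne_zero (hg0 _) (hg0 _)
      | exact hf0 _
      | exact hg0 _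
  have hx : ((f 0 * f 1 * f 2) * (g 0 * g 1 * g 2)) *
      (C a0 * X 0 + C a1 * X 1 + C a2 * X 2 + C a3 * X 3) = 0 := by
    rw [hb0, hb1, hb2, hc0, hc1, hc2] at hw
    simp only [map_zero, zero_mul, add_zero, zero_add] at hw
    linear_combination hw
  have key : C a0 * X 0 + C a1 * X 1 + C a2 * X 2 + C a3 * X 3
      = (0 : MvPolynomial (Fin 4) ℂ) := by
    rcases mul_eq_zero.mp hx with h | h
    · exact absurd h hFG
    · exact h
  have hcoeff : ∀ i : Fin 4,
      coeff (Finsupp.single i 1) (C a0 * X 0 + C a1 * X 1 + C a2 * X 2 + C a3 * X 3) = 0 := by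
    intro i; rw [key]; simp
  have ha0 : a0 = 0 := by
    have := hcoeff 0
    simp [coeff_C_mul, coeff_X', Finsupp.single_eq_single_iff] at this
    exact this
  have ha1 : a1 = 0 := by
    have := hcoeff 1
    simp [coeff_C_mul, coeff_X', Finsupp.single_eq_single_iff] at this
    exact this
  have ha2 : a2 = 0 := by
    have := hcoeff 2
    simp [coeff_C_mul, coeff_X', Finsupp.single_eq_single_iff] at this
    exact this
  have ha3 : a3 = 0 := by
    have := hcoeff 3
    simp [coeff_C_mul, coeff_X', Finsupp.single_eq_single_iff] at this
    exact this
  rintro (i | k | k)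
  · fin_cases i
    · exact ha0
    · exact ha1
    · exact ha2
    · exact ha3
  · fin_cases k
    · exact hb0
    · exact hb1
    · exact hb2
  · fin_cases k
    · exact hc0
    · exact hc1
    · exact hc2
end

section
/- Let p₀, p₁, p₂ ∈ ℂ[t, u] be homogeneous polynomials of degree 3, not all zero, satisfying p₀·p₂ = p₁². Then there exists a nonzero linear form ℓ ∈ ℂ[t, u] dividing each of p₀, p₁ and p₂. -/
open MvPolynomial

section ring
variable {R : Type*} [CommRing R] [IsDomain R]

lemma myPrimeUnit {a b : R} (ha : Prime a) (hb : Prime b) (h : a ∣ b) :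
    ∃ u, IsUnit u ∧ b = a * u := by
  obtain ⟨u, rfl⟩ := h
  exact ⟨u, (hb.irreducible.isUnit_or_isUnit rfl).resolve_left ha.not_unit, rfl⟩

lemma myPrimeSymm {a b : R} (ha : Prime a) (hb : Prime b) (h : a ∣ b) : b ∣ a := by
  obtain ⟨u, hu, rfl⟩ := myPrimeUnit ha hb h
  exact ⟨(hu.unit⁻¹ : Rˣ), by rw [mul_assoc, IsUnit.mul_val_inv, mul_one]⟩

lemma myHelperA {a b c s t : R} (ha : Prime a) (hab : ¬ a ∣ b) (hac : ¬ a ∣ c)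
    (h : a * b * c * s = t ^ 2) : a ∣ t ∧ a ∣ s := by
  have hat : a ∣ t := ha.dvd_of_dvd_pow (n := 2) ⟨b * c * s, by linear_combination -h⟩
  obtain ⟨t1, rfl⟩ := hat
  have h2 : b * (c * s) = a * t1 ^ 2 :=
    mul_left_cancel₀ ha.ne_zero (by linear_combination h)
  have h3 : a ∣ b * (c * s) := ⟨t1 ^ 2, h2⟩
  rcases ha.dvd_or_dvd h3 with h' | h'
  · exact absurd h' hab
  rcases ha.dvd_or_dvd h' with h'' | h''
  · exact absurd h'' hac
  exact ⟨dvd_mul_right a t1, h''⟩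

lemma myKey {a b c s t : R} (ha : Prime a) (hb : Prime b) (hc : Prime c)
    (h : a * b * c * s = t ^ 2) :
    (a ∣ t ∧ a ∣ s) ∨ (b ∣ t ∧ b ∣ s) ∨ (c ∣ t ∧ c ∣ s) := by
  by_cases hab : a ∣ b
  · by_cases hac : a ∣ c
    · left
      obtain ⟨u, hu, rfl⟩ := myPrimeUnit ha hb hab
      obtain ⟨v, hv, rfl⟩ := myPrimeUnit ha hc hac
      have hat : a ∣ t := ha.dvd_of_dvd_pow (n := 2) ⟨u * (v * s) * (a * a), by linear_combination -h⟩
      obtain ⟨t1, rfl⟩ := hat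
      have h2 : a * (u * (v * s)) = t1 ^ 2 :=
        mul_left_cancel₀ (mul_ne_zero ha.ne_zero ha.ne_zero) (by linear_combination h)
      obtain ⟨t2, rfl⟩ := ha.dvd_of_dvd_pow (n := 2) ⟨u * (v * s), h2.symm⟩
      have h3 : u * (v * s) = a * t2 ^ 2 :=
        mul_left_cancel₀ ha.ne_zero (by linear_combination h2)
      have h4 : a ∣ u * (v * s) := ⟨t2 ^ 2, h3⟩
      rcases ha.dvd_or_dvd h4 with h' | h'
      · exact absurd (isUnit_of_dvd_unit h' hu) ha.not_unit
      rcases ha.dvd_or_dvd h' with h'' | h''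
      · exact absurd (isUnit_of_dvd_unit h'' hv) ha.not_unit
      · exact ⟨dvd_mul_right a _, h''⟩
    · right; right
      have hca : ¬ c ∣ a := fun h' => hac (myPrimeSymm hc ha h')
      have hcb : ¬ c ∣ b := by
        intro hcb
        obtain ⟨u, hu, rfl⟩ := myPrimeUnit ha hb hab
        rcases hc.dvd_or_dvd hcb with h' | h'
        · exact hca h'
        · exact hc.not_unit (isUnit_of_dvd_unit h' hu)
      exact myHelperA hc hca hcb (by linear_combination h)
  · by_cases hbc : b ∣ c
    · left
      have hac : ¬ a ∣ c := by
        intro hac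
        obtain ⟨u, hu, rfl⟩ := myPrimeUnit hb hc hbc
        rcases ha.dvd_or_dvd hac with h' | h'
        · exact hab h'
        · exact ha.not_unit (isUnit_of_dvd_unit h' hu)
      exact myHelperA ha hab hac h
    · right; left
      have hba : ¬ b ∣ a := fun h' => hab (myPrimeSymm hb ha h')
      exact myHelperA hb hba hbc (by linear_combination h)

end ring

lemma myDvdAevalSub (d : MvPolynomial (Fin 2) ℂ) (w : Fin 2 → MvPolynomial (Fin 2) ℂ)
    (hw : ∀ i, d ∣ X i - w i) (p : MvPolynomial (Fin 2) ℂ) :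
    d ∣ p - aeval w p := by
  induction p using MvPolynomial.induction_on with
  | C a => simp [aeval_C, MvPolynomial.algebraMap_eq]
  | add p q hp hq =>
      have : p + q - aeval w (p + q) = (p - aeval w p) + (q - aeval w q) := by
        rw [map_add]; ring
      rw [this]; exact dvd_add hp hq
  | mul_X p i hp =>
      have : p * X i - aeval w (p * X i) =
          p * (X i - w i) + (p - aeval w p) * w i := by
        rw [map_mul, aeval_X]; ring
      rw [this]
      exact dvd_add ((hw i).mul_left p) (hp.mul_right _)

lemma myDvdIff (d : MvPolynomial (Fin 2) ℂ) (w : Fin 2 → MvPolynomial (Fin 2) ℂ)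
    (hw : ∀ i, d ∣ X i - w i) (hd : aeval w d = 0) (p : MvPolynomial (Fin 2) ℂ) :
    d ∣ p ↔ aeval w p = 0 := by
  constructor
  · rintro ⟨q, rfl⟩; rw [map_mul, hd, zero_mul]
  · intro h
    have := myDvdAevalSub d w hw p
    rwa [h, sub_zero] at this

lemma myPrimeOfKer (d : MvPolynomial (Fin 2) ℂ) (w : Fin 2 → MvPolynomial (Fin 2) ℂ)
    (hw : ∀ i, d ∣ X i - w i) (hd : aeval w d = 0) (hd0 : d ≠ 0) : Prime d := by
  refine ⟨hd0, ?_, ?_⟩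
  · intro hu
    have h1 : aeval w (1 : MvPolynomial (Fin 2) ℂ) = 0 :=
      (myDvdIff d w hw hd 1).mp hu.dvd
    simp at h1
  · intro a b hab
    rw [myDvdIff d w hw hd] at hab
    rw [myDvdIff d w hw hd, myDvdIff d w hw hd]
    rw [map_mul] at hab
    exact mul_eq_zero.mp hab

lemma myX1Prime : Prime (X 1 : MvPolynomial (Fin 2) ℂ) := by
  apply myPrimeOfKer _ ![X 0, 0]
  · intro i; fin_cases i <;> simp
  · simp
  · exact X_ne_zero 1

lemma myLinearPrime (r : ℂ) : Prime (X 0 - C r * X 1 : MvPolynomial (Fin 2) ℂ) := by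
  apply myPrimeOfKer _ ![C r * X 1, X 1]
  · intro i; fin_cases i <;> simp
  · simp [MvPolynomial.algebraMap_eq]
  · intro h
    have := congrArg (coeff (Finsupp.single 0 1)) h
    simp [coeff_X', coeff_C_mul, Finsupp.single_eq_single_iff] at this

lemma myDegreeTwo (m : Fin 2 →₀ ℕ) : m.degree = m 0 + m 1 := by
  rw [Finsupp.degree_apply, Finset.sum_subset (Finset.subset_univ m.support)]
  · exact Fin.sum_univ_two m
  · intro i _ hi
    simpa using (Finsupp.notMem_support_iff.mp hi)

lemma myHomDegree {q : MvPolynomial (Fin 2) ℂ} {n : ℕ} (hq : q.IsHomogeneous n)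
    {m : Fin 2 →₀ ℕ} (hm : coeff m q ≠ 0) : m 0 + m 1 = n := by
  rw [← myDegreeTwo, Finsupp.degree_eq_weight_one]
  exact hq hm

lemma myEqSingle {m : Fin 2 →₀ ℕ} {n : ℕ} (h0 : m 0 = n) (h1 : m 1 = 0) :
    m = Finsupp.single 0 n := by
  ext i
  fin_cases i <;> simp [h0, h1]

lemma myAevalSmul {A : Type*} [CommRing A] [Algebra ℂ A] {q : MvPolynomial (Fin 2) ℂ}
    {n : ℕ} (hq : q.IsHomogeneous n) (c : A) (v : Fin 2 → A) :
    aeval (c • v) q = c ^ n * aeval v q := by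
  conv_lhs => rw [q.as_sum]
  conv_rhs => rw [q.as_sum]
  rw [map_sum, map_sum, Finset.mul_sum]
  apply Finset.sum_congr rfl
  intro m hm
  rw [aeval_monomial, aeval_monomial]
  have hdeg : m 0 + m 1 = n := myHomDegree hq (mem_support_iff.mp hm)
  rw [Finsupp.prod_fintype _ _ (fun i => pow_zero _),
      Finsupp.prod_fintype _ _ (fun i => pow_zero _)]
  rw [Fin.prod_univ_two, Fin.prod_univ_two]
  simp only [Pi.smul_apply, smul_eq_mul]
  rw [← hdeg]
  ring

lemma myQuotHom {a q : MvPolynomial (Fin 2) ℂ} {m n : ℕ}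
    (ha : a.IsHomogeneous m) (h : (a * q).IsHomogeneous n) (ha0 : a ≠ 0) :
    q.IsHomogeneous (n - m) := by
  have key : ∀ j, m + j ≠ n → homogeneousComponent j q = 0 := by
    intro j hj
    have h2 : a * q = ∑ i ∈ Finset.range (q.totalDegree + 1),
        a * homogeneousComponent i q := by
      rw [← Finset.mul_sum, sum_homogeneousComponent]
    have h3 := congrArg (homogeneousComponent (m + j)) h2
    rw [homogeneousComponent_of_mem ((mem_homogeneousSubmodule _ _).mpr h),
      if_neg hj, map_sum,
      Finset.sum_congr rfl (fun i _ => homogeneousComponent_of_mem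
        ((mem_homogeneousSubmodule _ _).mpr
          (ha.mul (homogeneousComponent_isHomogeneous i q))))] at h3
    simp only [add_right_inj] at h3
    rw [Finset.sum_ite_eq (Finset.range (q.totalDegree + 1)) j
      (fun i => a * homogeneousComponent i q)] at h3
    by_cases hjr : j ∈ Finset.range (q.totalDegree + 1)
    · rw [if_pos hjr] at h3
      exact (mul_eq_zero.mp h3.symm).resolve_left ha0
    · exact homogeneousComponent_eq_zero _ q
        (by simpa [Nat.lt_succ_iff, not_le] using hjr)
  have hq : q = if n - m ∈ Finset.range (q.totalDegree + 1)
      then homogeneousComponent (n - m) q else 0 := by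
    conv_lhs => rw [← sum_homogeneousComponent q]
    rw [Finset.sum_congr rfl (g := fun i => if n - m = i
        then homogeneousComponent i q else 0) (fun i _ => ?_),
      Finset.sum_ite_eq]
    by_cases hi : n - m = i
    · simp [hi]
    · simp only [if_neg hi]
      exact key i (fun hc => hi (by omega))
  rw [hq]
  split
  · exact homogeneousComponent_isHomogeneous _ q
  · exact isHomogeneous_zero _ _ _

lemma myL1 {n : ℕ} (hn : 0 < n) {q : MvPolynomial (Fin 2) ℂ}
    (hq : q.IsHomogeneous n) (hq0 : q ≠ 0) :
    ∃ ℓ : MvPolynomial (Fin 2) ℂ, Prime ℓ ∧ ℓ.IsHomogeneous 1 ∧ ℓ ∣ q := by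
  by_cases hXd : (X 1 : MvPolynomial (Fin 2) ℂ) ∣ q
  · exact ⟨X 1, myX1Prime, isHomogeneous_X _ _, hXd⟩
  have hc : coeff (Finsupp.single 0 n) q ≠ 0 := by
    intro h0
    apply hXd
    conv_rhs => rw [q.as_sum]
    apply Finset.dvd_sum
    intro m hm
    rw [X_dvd_monomial]
    right
    intro hm1
    have := myHomDegree hq (mem_support_iff.mp hm)
    exact (mem_support_iff.mp hm) (myEqSingle (n := n) (by omega) hm1 ▸ h0)
  set f : Polynomial ℂ := aeval ![Polynomial.X, 1] q with hf
  have hfn : f.coeff n = coeff (Finsupp.single 0 n) q := by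
    rw [hf]
    conv_lhs => rw [q.as_sum]
    rw [map_sum, Polynomial.finset_sum_coeff]
    rw [Finset.sum_congr rfl (g := fun m => if n = m 0 then coeff m q else 0)
      (fun m hm => ?_)]
    · rw [Finset.sum_eq_single (Finsupp.single 0 n)]
      · simp
      · intro b hb hbne
        rw [if_neg]
        intro hnb
        exact hbne (myEqSingle (n := n) hnb.symm
          (by have := myHomDegree hq (mem_support_iff.mp hb); omega))
      · intro hns
        rw [notMem_support_iff] at hns
        simp [hns]
    · rw [aeval_monomial, Finsupp.prod_fintype _ _ (fun i => pow_zero _),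
        Fin.prod_univ_two]
      simp only [Matrix.cons_val_zero, Matrix.cons_val_one, Matrix.head_cons, one_pow,
        mul_one]
      rw [Polynomial.algebraMap_eq, Polynomial.coeff_C_mul, Polynomial.coeff_X_pow]
      simp [mul_ite]
  have hdeg : f.degree ≠ 0 := by
    intro h0
    have hle := Polynomial.le_degree_of_ne_zero (n := n) (by rw [hfn]; exact hc)
    rw [h0] at hle
    have : n ≤ 0 := by exact_mod_cast hle
    omega
  obtain ⟨r, hr⟩ := IsAlgClosed.exists_root f hdeg
  refine ⟨X 0 - C r * X 1, myLinearPrime r, (isHomogeneous_X _ _).sub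
    (isHomogeneous_C_mul_X r 1), ?_⟩
  let w : Fin 2 → MvPolynomial (Fin 2) ℂ := ![C r * X 1, X 1]
  have hw : ∀ i : Fin 2, (X 0 - C r * X 1 : MvPolynomial (Fin 2) ℂ) ∣ X i - w i := by
    intro i; fin_cases i
    · simpa [w] using dvd_rfl
    · simp [w]
  have h1 : aeval (((X 1 : MvPolynomial (Fin 2) ℂ) • ![C r, 1] :
      Fin 2 → MvPolynomial (Fin 2) ℂ)) q = 0 := by
    rw [myAevalSmul hq]
    have harg : (fun i => (Polynomial.aeval (C r : MvPolynomial (Fin 2) ℂ))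
        ((![Polynomial.X, 1] : Fin 2 → Polynomial ℂ) i)) = ![(C r : MvPolynomial (Fin 2) ℂ), 1] := by
      funext i; fin_cases i <;> simp
    have hθ : aeval ![(C r : MvPolynomial (Fin 2) ℂ), 1] q =
        Polynomial.aeval (C r : MvPolynomial (Fin 2) ℂ) f := by
      rw [hf, comp_aeval_apply, harg]
    have hz : Polynomial.aeval (C r : MvPolynomial (Fin 2) ℂ) f = 0 := by
      rw [← MvPolynomial.algebraMap_eq, Polynomial.aeval_algebraMap_apply]
      have hre : (Polynomial.aeval r) f = 0 := by
        rw [Polynomial.coe_aeval_eq_eval]; exact hr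
      rw [hre, map_zero]
    rw [hθ, hz, mul_zero]
  have h0 : aeval w q = 0 := by
    convert h1 using 3
    funext i; fin_cases i <;> simp [w, mul_comm]
  have hdvd := myDvdAevalSub _ w hw q
  rwa [h0, sub_zero] at hdvd

lemma myHomZero {q : MvPolynomial (Fin 2) ℂ} (hq : q.IsHomogeneous 0) :
    q = C (coeff 0 q) := by
  apply MvPolynomial.ext
  intro m
  rw [coeff_C]
  by_cases hm : m = 0
  · rw [if_pos hm.symm, hm]
  · rw [if_neg (fun h => hm h.symm)]
    exact hq.coeff_eq_zero (by
      rw [Ne, Finsupp.degree_eq_zero_iff]; exact hm)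

lemma myFactor {q : MvPolynomial (Fin 2) ℂ} (hq : q.IsHomogeneous 3) (h0 : q ≠ 0) :
    ∃ a b c : MvPolynomial (Fin 2) ℂ, Prime a ∧ Prime b ∧ Prime c ∧
      a.IsHomogeneous 1 ∧ b.IsHomogeneous 1 ∧ c.IsHomogeneous 1 ∧ q = a * b * c := by
  obtain ⟨a, pa, ha1, q1, rfl⟩ := myL1 (by norm_num) hq h0
  have hq1ne : q1 ≠ 0 := fun h => h0 (by rw [h, mul_zero])
  have hq1 : q1.IsHomogeneous 2 := by simpa using myQuotHom ha1 hq pa.ne_zero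
  obtain ⟨b, pb, hb1, q2, rfl⟩ := myL1 (by norm_num) hq1 hq1ne
  have hq2ne : q2 ≠ 0 := fun h => hq1ne (by rw [h, mul_zero])
  have hq2 : q2.IsHomogeneous 1 := by simpa using myQuotHom hb1 hq1 pb.ne_zero
  obtain ⟨c', pc, hc1, q3, rfl⟩ := myL1 (by norm_num) hq2 hq2ne
  have hq3ne : q3 ≠ 0 := fun h => hq2ne (by rw [h, mul_zero])
  have hq3 : q3.IsHomogeneous 0 := by simpa using myQuotHom hc1 hq2 pc.ne_zero
  obtain ⟨e, rfl⟩ : ∃ e, q3 = C e := ⟨_, myHomZero hq3⟩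
  have he : e ≠ 0 := fun h => hq3ne (by rw [h, map_zero])
  have hu : IsUnit (C e : MvPolynomial (Fin 2) ℂ) :=
    (isUnit_iff_ne_zero.mpr he).map (C : ℂ →+* MvPolynomial (Fin 2) ℂ)
  exact ⟨a, b, C e * c', pa, pb, Associated.prime ⟨hu.unit, by simp [mul_comm]⟩ pc,
    ha1, hb1, hc1.C_mul _, by ring⟩

/-- If `p₀, p₁, p₂` are binary cubic forms in `ℂ[t,u]`, not all zero, with
`p₀·p₂ = p₁²`, then some nonzero linear form divides all three. -/
theorem stmt_12 (p : Fin 3 → MvPolynomial (Fin 2) ℂ)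
    (hp : ∀ i, (p i).IsHomogeneous 3)
    (hne : ¬ ∀ i, p i = 0)
    (heq : p 0 * p 2 = p 1 ^ 2) :
    ∃ ℓ : MvPolynomial (Fin 2) ℂ, ℓ ≠ 0 ∧ ℓ.IsHomogeneous 1 ∧ ∀ i, ℓ ∣ p i := by
  by_cases h1 : p 1 = 0
  · have h02 : p 0 = 0 ∨ p 2 = 0 := by
      apply mul_eq_zero.mp
      rw [heq, h1]; ring
    by_cases h0 : p 0 = 0
    · have h2 : p 2 ≠ 0 := fun h2 => hne (by
        intro i; fin_cases i <;> assumption)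
      obtain ⟨ℓ, pr, hom, hdvd⟩ := myL1 (by norm_num) (hp 2) h2
      exact ⟨ℓ, pr.ne_zero, hom, by
        intro i; fin_cases i
        · show ℓ ∣ p 0; rw [h0]; exact dvd_zero _
        · show ℓ ∣ p 1; rw [h1]; exact dvd_zero _
        · exact hdvd⟩
    · have h2 : p 2 = 0 := h02.resolve_left h0
      obtain ⟨ℓ, pr, hom, hdvd⟩ := myL1 (by norm_num) (hp 0) h0
      exact ⟨ℓ, pr.ne_zero, hom, by
        intro i; fin_cases i
        · exact hdvd
        · show ℓ ∣ p 1; rw [h1]; exact dvd_zero _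
        · show ℓ ∣ p 2; rw [h2]; exact dvd_zero _⟩
  · have h0 : p 0 ≠ 0 := by
      intro h0
      apply h1
      have : p 1 ^ 2 = 0 := by rw [← heq, h0, zero_mul]
      exact pow_eq_zero_iff (n := 2) (by norm_num) |>.mp this
    obtain ⟨a, b, c, pa, pb, pc, ha1, hb1, hc1, hfact⟩ := myFactor (hp 0) h0
    have heq' : a * b * c * p 2 = p 1 ^ 2 := by rw [← hfact]; exact heq
    have habc : ∀ i : Fin 3, (a ∣ p i ∧ b ∣ p i ∧ c ∣ p i) ∨ True := fun _ => Or.inr trivial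
    rcases myKey pa pb pc heq' with ⟨ht, hs⟩ | ⟨ht, hs⟩ | ⟨ht, hs⟩
    · exact ⟨a, pa.ne_zero, ha1, by
        intro i; fin_cases i
        · show a ∣ p 0; rw [hfact]; exact ⟨b * c, by ring⟩
        · exact ht
        · exact hs⟩
    · exact ⟨b, pb.ne_zero, hb1, by
        intro i; fin_cases i
        · show b ∣ p 0; rw [hfact]; exact ⟨a * c, by ring⟩
        · exact ht
        · exact hs⟩
    · exact ⟨c, pc.ne_zero, hc1, by
        intro i; fin_cases i
        · show c ∣ p 0; rw [hfact]; exact ⟨a * b, by ring⟩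
        · exact ht
        · exact hs⟩
end
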